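/- arXiv:2204.09452 — 2 statements merged into one kernel-verified Lean document; each statement's English description precedes it below -/
import Mathlib

section
/- Let n, M, N be natural numbers and σ, δ real numbers with 0 < σ < δ ≤ 1, σ/2^(n+5) ≤ 3^(-N) ≤ σ/2^n ≤ 3^(-M) ≤ δ/2^n, and let y be a real number. Let C_N denote the set of endpoints of the intervals in the N-th level of the construction of the middle-third Cantor set (i.e., rationals a/3^N and 1 - a/3^N where a ∈ [0, 3^N] is an integer whose ternary expansion uses only digits 0 and 2), and let A_n^y(σ) = {x ∈ ℝ : ‖2^n x − y‖ < σ}, where ‖·‖ is distance to the nearest integer. Then |C_N ∩ A_n^y(σ)| ≤ c·|C_M ∩ A_n^y(2δ)| for some absolute constant c > 0. -/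
/-- distance from `x` to the nearest integer -/
noncomputable def nint (x : ℝ) : ℝ := |x - round x|

/-- `A_n^y(σ) = {x : ‖2^n x - y‖ < σ}` -/
def approxSet (n : ℕ) (y σ : ℝ) : Set ℝ := {x : ℝ | nint (2 ^ n * x - y) < σ}

/-- ternary digits of `a` are all `0` or `2` -/
def goodDigits (a : ℕ) : Prop := ∀ d ∈ Nat.digits 3 a, d ≠ 1

/-- left endpoints of the level-`N` intervals of the Cantor set -/
def leftEndpoints (N : ℕ) : Set ℝ :=
  {x : ℝ | ∃ a : ℕ, a < 3 ^ N ∧ goodDigits a ∧ x = (a : ℝ) / 3 ^ N}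

/-- all endpoints of the level-`N` intervals of the Cantor set -/
def endpoints (N : ℕ) : Set ℝ :=
  leftEndpoints N ∪ (fun x : ℝ => 1 - x) '' leftEndpoints N

lemma goodDigits_zero : goodDigits 0 := by intro d hd; simp at hd

lemma goodDigits_div3 {a : ℕ} (h : goodDigits a) : goodDigits (a / 3) := by
  intro d hd
  rcases Nat.eq_zero_or_pos a with rfl | ha
  · simp at hd
  · apply h
    rw [Nat.digits_def' (by norm_num : 1 < 3) ha]
    exact List.mem_cons_of_mem _ hd

lemma goodDigits_div_pow {a : ℕ} (h : goodDigits a) (k : ℕ) : goodDigits (a / 3 ^ k) := by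
  induction k with
  | zero => simpa using h
  | succ k ih =>
    rw [pow_succ, ← Nat.div_div_eq_div_mul]
    exact goodDigits_div3 ih

lemma goodDigits_step {q r : ℕ} (hq : goodDigits q) (hr : r ≠ 1) (hr3 : r < 3) :
    goodDigits (3 * q + r) := by
  intro d hd
  rcases Nat.eq_zero_or_pos (3 * q + r) with h0 | h0
  · rw [h0] at hd; simp at hd
  · rw [Nat.digits_def' (by norm_num : 1 < 3) h0] at hd
    have hmod : (3 * q + r) % 3 = r := by omega
    have hdiv : (3 * q + r) / 3 = q := by omega
    rw [hmod, hdiv] at hd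
    rcases List.mem_cons.mp hd with rfl | hd
    · exact hr
    · exact hq d hd

lemma goodDigits_compl : ∀ m : ℕ, ∀ a : ℕ, goodDigits a → a < 3 ^ m →
    goodDigits (3 ^ m - 1 - a) := by
  intro m
  induction m with
  | zero =>
    intro a _ ha
    have : a = 0 := by simpa using Nat.lt_one_iff.mp (by simpa using ha)
    subst this
    simpa using goodDigits_zero
  | succ m ih =>
    intro a hg ha
    have hq : goodDigits (a / 3) := goodDigits_div3 hg
    have h31 : (3:ℕ) ^ (m+1) = 3 * 3 ^ m := by ring
    have hq3 : a / 3 < 3 ^ m := by omega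
    have hr : a % 3 ≠ 1 := by
      rcases Nat.eq_zero_or_pos a with rfl | ha0
      · simp
      · exact hg (a % 3) (by
          rw [Nat.digits_def' (by norm_num : 1 < 3) ha0]
          exact List.mem_cons_self)
    have key : 3 ^ (m+1) - 1 - a = 3 * (3 ^ m - 1 - a / 3) + (2 - a % 3) := by omega
    rw [key]
    exact goodDigits_step (ih _ hq hq3) (by omega) (by omega)

lemma nint_le_abs (x : ℝ) (m : ℤ) : nint x ≤ |x - m| := by
  by_cases h : m = round x
  · subst h; exact le_of_eq rfl
  · have h1 : nint x ≤ 1/2 := abs_sub_round x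
    have h2 : (1:ℝ) ≤ |(m:ℝ) - (round x : ℤ)| := by
      have : (1:ℤ) ≤ |m - round x| := Int.one_le_abs (sub_ne_zero.mpr h)
      exact_mod_cast this
    have h3 : |(m:ℝ) - (round x : ℤ)| ≤ |x - m| + |x - (round x : ℤ)| := by
      have e : (m:ℝ) - (round x : ℤ) = -((x : ℝ) - m) + (x - (round x : ℤ)) := by ring
      rw [e]
      exact (abs_add_le _ _).trans (by rw [abs_neg])
    have h4 : |x - (round x : ℤ)| ≤ 1/2 := abs_sub_round x
    have : nint x = |x - (round x : ℤ)| := rfl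
    linarith

lemma finite_endpoints (N : ℕ) : (endpoints N).Finite := by
  have h : (leftEndpoints N).Finite := by
    apply Set.Finite.subset (Set.Finite.image (fun a : ℕ => (a:ℝ)/3^N) (Set.finite_Iio (3^N)))
    rintro x ⟨a, ha, _, rfl⟩
    exact ⟨a, ha, rfl⟩
  exact h.union (h.image _)

lemma exists_int_endpoint {N : ℕ} {x : ℝ} (hx : x ∈ endpoints N) :
    ∃ j : ℤ, (3:ℝ)^N * x = j := by
  rcases hx with ⟨a, _, _, rfl⟩ | ⟨z, ⟨a, _, _, rfl⟩, rfl⟩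
  · refine ⟨a, ?_⟩
    have h3 : (0:ℝ) < 3^N := by positivity
    field_simp
    norm_cast
  · refine ⟨3^N - a, ?_⟩
    have h3 : (0:ℝ) < 3^N := by positivity
    show (3:ℝ)^N * (1 - (a:ℝ)/3^N) = ((3^N - a : ℤ) : ℝ)
    push_cast
    field_simp

lemma exists_anchor {M N : ℕ} (hMN : M ≤ N) {x : ℝ} (hx : x ∈ endpoints N) :
    ∃ a : ℕ, a + 1 ≤ 3 ^ M ∧ goodDigits a ∧ (a:ℝ)/3^M ≤ x ∧ x ≤ ((a:ℝ)+1)/3^M := by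
  have hp : 0 < 3 ^ (N - M) := by positivity
  have hpow : (3:ℕ) ^ M * 3 ^ (N - M) = 3 ^ N := by
    rw [← pow_add]; congr 1; omega
  have e3 : (3:ℝ) ^ N = 3 ^ M * 3 ^ (N - M) := by
    rw [← pow_add]; congr 1; omega
  have h3M : (0:ℝ) < 3 ^ M := by positivity
  have h3N : (0:ℝ) < 3 ^ N := by positivity
  have h3NM : (0:ℝ) < 3 ^ (N - M) := by positivity
  -- core helper facts for b : ℕ with b < 3^N
  have core : ∀ b : ℕ, b < 3 ^ N →
      (b / 3 ^ (N - M)) + 1 ≤ 3 ^ M ∧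
      ((b / 3 ^ (N - M) : ℕ) : ℝ) * 3 ^ (N - M) ≤ b ∧
      (b : ℝ) + 1 ≤ (((b / 3 ^ (N - M) : ℕ) : ℝ) + 1) * 3 ^ (N - M) := by
    intro b hb
    have h1 : b / 3 ^ (N - M) * 3 ^ (N - M) ≤ b := Nat.div_mul_le_self _ _
    have h2 : b < (b / 3 ^ (N - M) + 1) * 3 ^ (N - M) := by
      have hm := Nat.mod_lt b hp
      have hd := Nat.div_add_mod b (3 ^ (N - M))
      nlinarith [hd, hm]
    have h0 : b / 3 ^ (N - M) < 3 ^ M := by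
      rw [Nat.div_lt_iff_lt_mul hp]
      calc b < 3 ^ N := hb
        _ = 3 ^ M * 3 ^ (N - M) := hpow.symm
    refine ⟨by omega, ?_, ?_⟩
    · exact_mod_cast h1
    · have h2b : b + 1 ≤ (b / 3 ^ (N - M) + 1) * 3 ^ (N - M) := h2
      exact_mod_cast h2b
  rcases hx with ⟨a, ha, hg, rfl⟩ | ⟨z, ⟨a, ha, hg, rfl⟩, rfl⟩
  · obtain ⟨hb1, hb2, hb3⟩ := core a ha
    refine ⟨a / 3 ^ (N - M), hb1, goodDigits_div_pow hg _, ?_, ?_⟩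
    · rw [div_le_div_iff₀ h3M h3N, e3]
      nlinarith
    · rw [div_le_div_iff₀ h3N h3M, e3]
      nlinarith
  · -- x = 1 - a/3^N
    have hpos : 0 < 3 ^ N := by positivity
    set r : ℕ := 3 ^ N - 1 - a with hrdef
    have hrg : goodDigits r := goodDigits_compl N a hg ha
    have hrlt : r < 3 ^ N := by omega
    obtain ⟨hb1, hb2, hb3⟩ := core r hrlt
    have hxr : (1:ℝ) - (a:ℝ)/3^N = ((r:ℝ) + 1)/3^N := by
      have : (r:ℝ) + 1 + a = 3 ^ N := by
        have : (r + 1 + a : ℕ) = 3 ^ N := by omega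
        exact_mod_cast this
      field_simp
      linarith
    refine ⟨r / 3 ^ (N - M), hb1, goodDigits_div_pow hrg _, ?_, ?_⟩
    · show ((r / 3 ^ (N - M) : ℕ) : ℝ)/3^M ≤ 1 - (a:ℝ)/3^N
      rw [hxr, div_le_div_iff₀ h3M h3N, e3]
      nlinarith
    · show (1:ℝ) - (a:ℝ)/3^N ≤ (((r / 3 ^ (N - M) : ℕ) : ℝ) + 1)/3^M
      rw [hxr, div_le_div_iff₀ h3N h3M, e3]
      nlinarith

lemma ceil_endpoint {M N : ℕ} (hMN : M ≤ N) {x : ℝ} (hx : x ∈ endpoints N) :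
    ((⌈(3:ℝ)^M * x⌉ : ℝ)/3^M) ∈ endpoints M := by
  obtain ⟨a, ha, hg, hl, hr⟩ := exists_anchor hMN hx
  have h3M : (0:ℝ) < 3 ^ M := by positivity
  have hup : ⌈(3:ℝ)^M * x⌉ ≤ (a:ℤ) + 1 := by
    apply Int.ceil_le.mpr
    push_cast
    rw [le_div_iff₀ h3M] at hr
    linarith [hr]
  have hlo : (a:ℤ) ≤ ⌈(3:ℝ)^M * x⌉ := by
    have h1 : (a:ℝ) ≤ 3^M * x := by
      rw [div_le_iff₀ h3M] at hl
      linarith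
    have := h1.trans (Int.le_ceil _)
    exact_mod_cast this
  have hcase : ⌈(3:ℝ)^M * x⌉ = (a:ℤ) ∨ ⌈(3:ℝ)^M * x⌉ = (a:ℤ) + 1 := by omega
  rcases hcase with h | h
  · left
    exact ⟨a, by omega, hg, by rw [h]; norm_num⟩
  · right
    refine ⟨((3^M - 1 - a : ℕ) : ℝ)/3^M,
      ⟨3^M - 1 - a, by omega, goodDigits_compl M a hg (by omega), rfl⟩, ?_⟩
    have hc : ((3^M - 1 - a : ℕ) : ℝ) = 3^M - 1 - a := by
      have h1 : ((3^M - 1 - a : ℕ) + 1 + a : ℕ) = 3^M := by omega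
      have : (((3^M - 1 - a : ℕ) : ℝ) + 1 + a) = 3^M := by exact_mod_cast h1
      linarith
    show 1 - ((3^M - 1 - a : ℕ) : ℝ)/3^M = (⌈(3:ℝ)^M * x⌉ : ℝ)/3^M
    rw [h, hc]
    push_cast
    field_simp
    ring

theorem stmt0 :
    ∃ c : ℝ, 0 < c ∧ ∀ (n M N : ℕ) (σ δ y : ℝ),
      0 < σ → σ < δ → δ ≤ 1 →
      σ / 2 ^ (n + 5) ≤ 3 ^ (-(N : ℤ)) →
      (3 : ℝ) ^ (-(N : ℤ)) ≤ σ / 2 ^ n →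
      σ / 2 ^ n ≤ 3 ^ (-(M : ℤ)) →
      (3 : ℝ) ^ (-(M : ℤ)) ≤ δ / 2 ^ n →
      ((endpoints N ∩ approxSet n y σ).ncard : ℝ) ≤
        c * (endpoints M ∩ approxSet n y (2 * δ)).ncard := by
  classical
  refine ⟨325, by norm_num, ?_⟩
  intro n M N σ δ y hσ hσδ hδ1 h1 h2 h3 h4
  have h2n : (0:ℝ) < 2 ^ n := by positivity
  have h3M : (0:ℝ) < (3:ℝ) ^ M := by positivity
  have h3N : (0:ℝ) < (3:ℝ) ^ N := by positivity
  rw [zpow_neg, zpow_natCast] at h1 h2 h3 h4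
  -- M ≤ N
  have hMN : M ≤ N := by
    have hinv : ((3:ℝ)^N)⁻¹ ≤ ((3:ℝ)^M)⁻¹ := le_trans h2 h3
    have h35 : (3:ℝ)^M ≤ 3^N := by
      rwa [inv_le_inv₀ h3N h3M] at hinv
    exact (pow_le_pow_iff_right₀ (by norm_num : (1:ℝ) < 3)).mp h35
  -- 2^n * (3^M)⁻¹ ≤ δ
  have hδ2M : (2:ℝ)^n * ((3:ℝ)^M)⁻¹ ≤ δ := by
    rw [le_div_iff₀ h2n] at h4
    linarith
  -- (3^N) * σ / 2^n ≤ 32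
  have hσ32 : (3:ℝ)^N * σ / 2^n ≤ 32 := by
    rw [div_le_iff₀ (by positivity : (0:ℝ) < 2^(n+5))] at h1
    have hpow : (2:ℝ)^(n+5) = 2^n * 32 := by rw [pow_add]; norm_num
    rw [div_le_iff₀ h2n]
    rw [hpow] at h1
    have := mul_le_mul_of_nonneg_left h1 (le_of_lt h3N)
    calc (3:ℝ)^N * σ ≤ 3^N * (((3:ℝ)^N)⁻¹ * (2^n*32)) := this
      _ = 32 * 2^n := by field_simp
  set S := endpoints N ∩ approxSet n y σ with hS
  set T := endpoints M ∩ approxSet n y (2*δ) with hT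
  have hSfin : S.Finite := (finite_endpoints N).inter_of_left _
  have hTfin : T.Finite := (finite_endpoints M).inter_of_left _
  set Φ : ℝ → ℝ := fun x => (⌈(3:ℝ)^M * x⌉ : ℝ)/3^M with hΦdef
  have hΦ_ge : ∀ x : ℝ, x ≤ Φ x := by
    intro x
    rw [hΦdef]
    simp only
    rw [le_div_iff₀ h3M]
    calc x * 3^M = 3^M * x := mul_comm _ _
      _ ≤ _ := Int.le_ceil _
  have hΦ_le : ∀ x : ℝ, Φ x ≤ x + ((3:ℝ)^M)⁻¹ := by
    intro x
    rw [hΦdef]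
    simp only
    rw [div_le_iff₀ h3M]
    have h' : (⌈(3:ℝ)^M*x⌉:ℝ) ≤ 3^M*x + 1 := le_of_lt (Int.ceil_lt_add_one _)
    have h'' : (x + ((3:ℝ)^M)⁻¹) * 3^M = x * 3^M + 1 := by field_simp
    nlinarith
  -- Claim 1
  have hmapT : ∀ x ∈ S, Φ x ∈ T := by
    rintro x ⟨hxE, hxA⟩
    have hdist : |(2:ℝ)^n * Φ x - 2^n * x| ≤ δ := by
      have h0 : (0:ℝ) ≤ 2^n * Φ x - 2^n * x := by
        have := hΦ_ge x
        nlinarith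
      rw [abs_of_nonneg h0]
      have := hΦ_le x
      nlinarith
    refine ⟨ceil_endpoint hMN hxE, ?_⟩
    have hk := nint_le_abs ((2:ℝ)^n * Φ x - y) (round ((2:ℝ)^n * x - y))
    have hA : |(2:ℝ)^n * x - y - round ((2:ℝ)^n * x - y)| < σ := hxA
    have htri : |(2:ℝ)^n * Φ x - y - round ((2:ℝ)^n * x - y)| ≤
        |(2:ℝ)^n * x - y - round ((2:ℝ)^n * x - y)| + |(2:ℝ)^n * Φ x - 2^n * x| := by
      have e : (2:ℝ)^n * Φ x - y - round ((2:ℝ)^n * x - y) =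
          ((2:ℝ)^n * x - y - round ((2:ℝ)^n * x - y)) + ((2:ℝ)^n * Φ x - 2^n * x) := by ring
      rw [e]
      exact abs_add_le _ _
    show nint ((2:ℝ)^n * Φ x - y) < 2 * δ
    calc nint ((2:ℝ)^n * Φ x - y) ≤ _ := hk
      _ ≤ _ := htri
      _ < σ + δ := by linarith
      _ < 2 * δ := by linarith
  set k : ℝ → ℤ := fun x => round ((2:ℝ)^n * x - y) with hkdef
  set f : ℝ → ℝ × ℤ × ℤ := fun x =>
    (Φ x, k x - k (Φ x), round ((3:ℝ)^N * x) - round ((3:ℝ)^N * ((y + k x)/2^n))) with hfdef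
  -- second coordinate bound
  have hsnd : ∀ x ∈ S, k x - k (Φ x) ∈ Finset.Icc (-2 : ℤ) 2 := by
    rintro x ⟨hxE, hxA⟩
    have hA := abs_lt.mp (show |(2:ℝ)^n * x - y - (k x : ℤ)| < σ from hxA)
    have hB := abs_le.mp (abs_sub_round ((2:ℝ)^n * Φ x - y))
    have hC1 : (0:ℝ) ≤ 2^n * Φ x - 2^n * x := by have := hΦ_ge x; nlinarith
    have hC2 : (2:ℝ)^n * Φ x - 2^n * x ≤ δ := by have := hΦ_le x; nlinarith
    have hlo : (-3 : ℝ) < ((k x : ℤ) : ℝ) - ((k (Φ x) : ℤ) : ℝ) := by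
      linarith [hB.1, hB.2, hA.1, hA.2]
    have hhi : ((k x : ℤ) : ℝ) - ((k (Φ x) : ℤ) : ℝ) < 3 := by
      linarith [hB.1, hB.2, hA.1, hA.2]
    have hlo' : (-3 : ℤ) < k x - k (Φ x) := by exact_mod_cast hlo
    have hhi' : k x - k (Φ x) < 3 := by exact_mod_cast hhi
    rw [Finset.mem_Icc]
    omega
  -- third coordinate bound
  have hthd : ∀ x ∈ S, round ((3:ℝ)^N * x) - round ((3:ℝ)^N * ((y + k x)/2^n)) ∈
      Finset.Icc (-32 : ℤ) 32 := by
    rintro x ⟨hxE, hxA⟩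
    obtain ⟨j, hj⟩ := exists_int_endpoint hxE
    have hjr : round ((3:ℝ)^N * x) = j := by rw [hj, round_intCast]
    have hA : |(2:ℝ)^n * x - y - (k x : ℤ)| < σ := hxA
    have hcenter : |(3:ℝ)^N * x - (3:ℝ)^N * ((y + k x)/2^n)| < 32 := by
      have e : (3:ℝ)^N * x - (3:ℝ)^N * ((y + k x)/2^n) =
          ((3:ℝ)^N / 2^n) * ((2:ℝ)^n * x - y - (k x : ℤ)) := by
        field_simp
        ring
      rw [e, abs_mul, abs_of_nonneg (by positivity : (0:ℝ) ≤ (3:ℝ)^N / 2^n)]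
      have hb : (3:ℝ)^N / 2^n * σ ≤ 32 := by
        rw [div_mul_eq_mul_div]
        exact hσ32
      have hpos : (0:ℝ) < (3:ℝ)^N / 2^n := by positivity
      calc (3:ℝ)^N / 2^n * |(2:ℝ)^n * x - y - (k x : ℤ)| < (3:ℝ)^N / 2^n * σ := by
            exact mul_lt_mul_of_pos_left hA hpos
        _ ≤ 32 := hb
    have hround := abs_le.mp (abs_sub_round ((3:ℝ)^N * ((y + k x)/2^n)))
    have hcen := abs_lt.mp hcenter
    have hlo : (-33 : ℝ) < ((j : ℤ) : ℝ) - ((round ((3:ℝ)^N * ((y + k x)/2^n)) : ℤ) : ℝ) := by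
      linarith [hcen.1, hcen.2, hround.1, hround.2, hj]
    have hhi : ((j : ℤ) : ℝ) - ((round ((3:ℝ)^N * ((y + k x)/2^n)) : ℤ) : ℝ) < 33 := by
      linarith [hcen.1, hcen.2, hround.1, hround.2, hj]
    have hlo' : (-33 : ℤ) < j - round ((3:ℝ)^N * ((y + k x)/2^n)) := by exact_mod_cast hlo
    have hhi' : j - round ((3:ℝ)^N * ((y + k x)/2^n)) < 33 := by exact_mod_cast hhi
    rw [hjr, Finset.mem_Icc]
    omega
  -- the card bound
  have hcard : hSfin.toFinset.card ≤ 325 * hTfin.toFinset.card := by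
    have hmaps : ∀ x ∈ hSfin.toFinset,
        f x ∈ hTfin.toFinset ×ˢ (Finset.Icc (-2 : ℤ) 2 ×ˢ Finset.Icc (-32 : ℤ) 32) := by
      intro x hx
      rw [Set.Finite.mem_toFinset] at hx
      rw [Finset.mem_product, Finset.mem_product]
      exact ⟨(Set.Finite.mem_toFinset _).mpr (hmapT x hx), hsnd x hx, hthd x hx⟩
    have hinj : Set.InjOn f (hSfin.toFinset : Set ℝ) := by
      intro x₁ hx₁ x₂ hx₂ hfeq
      have hx₁' : x₁ ∈ S := by simpa using hx₁
      have hx₂' : x₂ ∈ S := by simpa using hx₂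
      obtain ⟨j₁, hj₁⟩ := exists_int_endpoint hx₁'.1
      obtain ⟨j₂, hj₂⟩ := exists_int_endpoint hx₂'.1
      have h1' : Φ x₁ = Φ x₂ := congrArg Prod.fst hfeq
      have h2' : k x₁ - k (Φ x₁) = k x₂ - k (Φ x₂) := congrArg (Prod.fst ∘ Prod.snd) hfeq
      have h3' : round ((3:ℝ)^N * x₁) - round ((3:ℝ)^N * ((y + k x₁)/2^n)) =
          round ((3:ℝ)^N * x₂) - round ((3:ℝ)^N * ((y + k x₂)/2^n)) :=
        congrArg (Prod.snd ∘ Prod.snd) hfeq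
      have hkeq : k x₁ = k x₂ := by rw [h1'] at h2'; omega
      rw [hkeq, hj₁, hj₂, round_intCast, round_intCast] at h3'
      have : j₁ = j₂ := by omega
      have : (3:ℝ)^N * x₁ = (3:ℝ)^N * x₂ := by rw [hj₁, hj₂, this]
      exact mul_left_cancel₀ (ne_of_gt h3N) this
    calc hSfin.toFinset.card ≤
        (hTfin.toFinset ×ˢ (Finset.Icc (-2 : ℤ) 2 ×ˢ Finset.Icc (-32 : ℤ) 32)).card :=
          Finset.card_le_card_of_injOn f hmaps hinj
      _ = 325 * hTfin.toFinset.card := by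
          rw [Finset.card_product, Finset.card_product]
          simp [Int.card_Icc]
          ring
  have hfin : (S.ncard : ℝ) ≤ 325 * T.ncard := by
    rw [Set.ncard_eq_toFinset_card S hSfin, Set.ncard_eq_toFinset_card T hTfin]
    exact_mod_cast hcard
  exact hfin
end

section
/- Let n, M, N be natural numbers and σ, δ real numbers with 0 < σ < δ ≤ 1 and σ/2^(n+5) ≤ 3^(-N) ≤ σ/2^n ≤ 3^(-M) ≤ δ/2^n, and let y ∈ ℝ. Let L_N be the set of rationals a/3^N where a ∈ [0, 3^N) is an integer whose ternary expansion contains only digits 0 and 2, and A_n^y(σ) = {x ∈ ℝ : ‖2^n x − y‖ < σ}. Then |L_N ∩ A_n^y(σ)| ≤ c·|L_M ∩ A_n^y(2δ)| for some absolute constant c. -/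
lemma round_min (x : ℝ) (m : ℤ) : |x - round x| ≤ |x - m| := by
  rcases eq_or_ne m (round x) with h | h
  · rw [h]
  · have h1 : |x - round x| ≤ 1/2 := abs_sub_round x
    have h2 : (1:ℝ) ≤ |(m : ℝ) - round x| := by
      have hne : m - round x ≠ 0 := sub_ne_zero.mpr h
      have := Int.one_le_abs hne
      calc (1:ℝ) = ((1:ℤ):ℝ) := by norm_num
        _ ≤ ((|m - round x| : ℤ) : ℝ) := by exact_mod_cast this
        _ = |(m:ℝ) - round x| := by push_cast [Int.cast_abs]; ring_nf
    have h3 : |(m:ℝ) - round x| ≤ |x - m| + |x - round x| := by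
      have he : (m:ℝ) - round x = (x - round x) - (x - m) := by ring
      rw [he]
      calc |(x - round x) - (x - m)| ≤ |x - round x| + |x - m| := abs_sub _ _
        _ = |x - m| + |x - round x| := by ring
    linarith

lemma nint_add_le (u v : ℝ) : nint (u + v) ≤ nint u + |v| := by
  unfold nint
  calc |u + v - round (u + v)| ≤ |u + v - round u| := round_min _ _
    _ = |(u - round u) + v| := by ring_nf
    _ ≤ |u - round u| + |v| := abs_add_le _ _

lemma leftEndpoints_finite (N : ℕ) : (leftEndpoints N).Finite := by
  apply Set.Finite.subset ((Set.finite_Iio (3 ^ N : ℕ)).image (fun a : ℕ => (a : ℝ) / 3 ^ N))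
  rintro x ⟨a, ha, -, rfl⟩
  exact ⟨a, ha, rfl⟩

set_option maxHeartbeats 2000000 in
theorem stmt1 :
    ∃ c : ℝ, 0 < c ∧ ∀ (n M N : ℕ) (σ δ y : ℝ),
      0 < σ → σ < δ → δ ≤ 1 →
      σ / 2 ^ (n + 5) ≤ 3 ^ (-(N : ℤ)) →
      (3 : ℝ) ^ (-(N : ℤ)) ≤ σ / 2 ^ n →
      σ / 2 ^ n ≤ 3 ^ (-(M : ℤ)) →
      (3 : ℝ) ^ (-(M : ℤ)) ≤ δ / 2 ^ n →
      ((leftEndpoints N ∩ approxSet n y σ).ncard : ℝ) ≤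
        c * (leftEndpoints M ∩ approxSet n y (2 * δ)).ncard := by
  classical
  refine ⟨917, by norm_num, ?_⟩
  intro n M N σ δ y hσ hσδ hδ1 h1 h2 h3 h4
  -- basic positivity and rewriting of zpow
  have hp2 : (0:ℝ) < 2 ^ n := by positivity
  have hp3N : (0:ℝ) < 3 ^ N := by positivity
  have hp3M : (0:ℝ) < 3 ^ M := by positivity
  have hNe : (3:ℝ) ^ (-(N : ℤ)) = ((3:ℝ) ^ N)⁻¹ := by
    rw [zpow_neg, zpow_natCast]
  have hMe : (3:ℝ) ^ (-(M : ℤ)) = ((3:ℝ) ^ M)⁻¹ := by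
    rw [zpow_neg, zpow_natCast]
  rw [hNe] at h1 h2
  rw [hMe] at h3 h4
  have hδpos : 0 < δ := lt_trans hσ hσδ
  have hMN : M ≤ N := by
    have hinv : ((3:ℝ) ^ N)⁻¹ ≤ ((3:ℝ) ^ M)⁻¹ := le_trans h2 h3
    have hpow : (3:ℝ) ^ M ≤ (3:ℝ) ^ N :=
      (inv_le_inv₀ hp3N hp3M).mp hinv
    exact_mod_cast (pow_le_pow_iff_right₀ (by norm_num : (1:ℝ) < 3)).mp hpow
  -- key numeric facts
  have h2n3M : (2:ℝ) ^ n * ((3:ℝ) ^ M)⁻¹ ≤ δ := by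
    have hh := mul_le_mul_of_nonneg_left h4 hp2.le
    have he : (2:ℝ) ^ n * (δ / 2 ^ n) = δ := by field_simp
    linarith
  have hσ3N : σ * (3:ℝ) ^ N ≤ 32 * 2 ^ n := by
    have h5 : (0:ℝ) < 2 ^ (n+5) := by positivity
    have hh : σ ≤ ((3:ℝ) ^ N)⁻¹ * 2 ^ (n+5) := (div_le_iff₀ h5).mp h1
    have hh2 := mul_le_mul_of_nonneg_right hh hp3N.le
    have he : ((3:ℝ) ^ N)⁻¹ * 2 ^ (n+5) * 3 ^ N = 32 * 2 ^ n := by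
      field_simp
      ring
    linarith
  -- sets and finiteness
  set S : Set ℝ := leftEndpoints N ∩ approxSet n y σ with hSdef
  set T : Set ℝ := leftEndpoints M ∩ approxSet n y (2 * δ) with hTdef
  have hSfin : S.Finite := (leftEndpoints_finite N).inter_of_left _
  have hTfin : T.Finite := (leftEndpoints_finite M).inter_of_left _
  set f : ℝ → ℝ := fun x => (⌊(3:ℝ) ^ M * x⌋₊ : ℝ) / 3 ^ M with hfdef
  have hkey : ∀ x ∈ S, f x ∈ T ∧ 0 ≤ x - f x ∧ x - f x < ((3:ℝ) ^ M)⁻¹ ∧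
      ((⌊(3:ℝ) ^ N * x⌋ : ℝ) = (3:ℝ) ^ N * x) := by
    rintro x ⟨⟨a, ha3, hagood, rfl⟩, hxA⟩
    set k : ℕ := 3 ^ (N - M) with hkdef
    have hkpos : 0 < k := pow_pos (by norm_num) _
    have hkR : (0:ℝ) < (k:ℝ) := by exact_mod_cast hkpos
    have h3Nsplit : (3:ℝ) ^ N = (k:ℝ) * 3 ^ M := by
      rw [hkdef]
      push_cast
      rw [← pow_add, Nat.sub_add_cancel hMN]
    have hval : (3:ℝ) ^ M * ((a:ℝ) / 3 ^ N) = (a:ℝ) / (k:ℝ) := by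
      rw [h3Nsplit]; field_simp
    have hfx : f ((a:ℝ) / 3 ^ N) = ((a / k : ℕ) : ℝ) / 3 ^ M := by
      rw [hfdef]
      simp only
      rw [hval, Nat.floor_div_eq_div]
    have hbd : a / k < 3 ^ M := by
      rw [Nat.div_lt_iff_lt_mul hkpos]
      calc a < 3 ^ N := ha3
        _ = 3 ^ M * k := by rw [hkdef, ← pow_add, Nat.add_sub_cancel' hMN]
    have hgood : goodDigits (a / k) := goodDigits_div_pow hagood _
    have hmodR : ((a % k : ℕ) : ℝ) < (k:ℝ) := by exact_mod_cast Nat.mod_lt a hkpos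
    have hdiff : (a:ℝ) / 3 ^ N - f ((a:ℝ) / 3 ^ N) = ((a % k : ℕ) : ℝ) / 3 ^ N := by
      rw [hfx]
      have haeq : (a:ℝ) = (k:ℝ) * ((a / k : ℕ) : ℝ) + ((a % k : ℕ) : ℝ) := by
        exact_mod_cast (Nat.div_add_mod a k).symm
      have hrw : ((a / k : ℕ) : ℝ) / 3 ^ M = ((a / k : ℕ) : ℝ) * (k:ℝ) / 3 ^ N := by
        rw [h3Nsplit]
        field_simp
      rw [hrw, div_sub_div_same]
      congr 1
      linarith [haeq]
    have hdiff0 : 0 ≤ (a:ℝ) / 3 ^ N - f ((a:ℝ) / 3 ^ N) := by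
      rw [hdiff]; positivity
    have hdiff1 : (a:ℝ) / 3 ^ N - f ((a:ℝ) / 3 ^ N) < ((3:ℝ) ^ M)⁻¹ := by
      rw [hdiff]
      rw [div_lt_iff₀ hp3N]
      rw [h3Nsplit]
      calc ((a % k : ℕ) : ℝ) < (k:ℝ) := hmodR
        _ = ((3:ℝ)^M)⁻¹ * ((k:ℝ) * 3 ^ M) := by field_simp
    have hfloorN : ((⌊(3:ℝ) ^ N * ((a:ℝ) / 3 ^ N)⌋ : ℝ) = (3:ℝ) ^ N * ((a:ℝ) / 3 ^ N)) := by
      have : (3:ℝ) ^ N * ((a:ℝ) / 3 ^ N) = (a:ℝ) := by field_simp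
      rw [this, Int.floor_natCast]
      push_cast
      ring
    refine ⟨⟨⟨a / k, hbd, hgood, hfx⟩, ?_⟩, hdiff0, hdiff1, hfloorN⟩
    -- approx set membership of f x
    have hA : nint (2 ^ n * ((a:ℝ) / 3 ^ N) - y) < σ := hxA
    have hsplit : 2 ^ n * f ((a:ℝ) / 3 ^ N) - y =
        (2 ^ n * ((a:ℝ) / 3 ^ N) - y) +
          (-(2 ^ n * ((a:ℝ) / 3 ^ N - f ((a:ℝ) / 3 ^ N)))) := by ring
    show nint (2 ^ n * f ((a:ℝ) / 3 ^ N) - y) < 2 * δ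
    rw [hsplit]
    have hb := nint_add_le (2 ^ n * ((a:ℝ) / 3 ^ N) - y)
      (-(2 ^ n * ((a:ℝ) / 3 ^ N - f ((a:ℝ) / 3 ^ N))))
    have habs : |(-(2 ^ n * ((a:ℝ) / 3 ^ N - f ((a:ℝ) / 3 ^ N))))| < δ := by
      rw [abs_neg, abs_of_nonneg (by positivity)]
      calc 2 ^ n * ((a:ℝ) / 3 ^ N - f ((a:ℝ) / 3 ^ N)) < 2 ^ n * ((3:ℝ) ^ M)⁻¹ := by
            exact mul_lt_mul_of_pos_left hdiff1 hp2
        _ ≤ δ := h2n3M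
    linarith
  -- pass to finsets and count fibers
  have hmaps : ∀ x ∈ hSfin.toFinset, f x ∈ hTfin.toFinset := by
    intro x hx
    rw [Set.Finite.mem_toFinset] at hx ⊢
    exact (hkey x hx).1
  have hfiber : ∀ b0 ∈ hTfin.toFinset,
      (hSfin.toFinset.filter fun x => f x = b0).card ≤ 917 := by
    intro b0 _
    rcases (hSfin.toFinset.filter fun x => f x = b0).eq_empty_or_nonempty with he | ⟨x0, hx0⟩
    · simp [he]
    have hx0' := Finset.mem_filter.mp hx0
    have hx0S : x0 ∈ S := (Set.Finite.mem_toFinset _).mp hx0'.1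
    have hfx0 : f x0 = b0 := hx0'.2
    set g : ℝ → ℤ × ℤ := fun x =>
      (round (2 ^ n * x - y) - round (2 ^ n * x0 - y),
       ⌊(3:ℝ) ^ N * x⌋ - ⌊(3:ℝ) ^ N * x0⌋ -
         ⌊(3:ℝ) ^ N / 2 ^ n * ((round (2 ^ n * x - y) - round (2 ^ n * x0 - y) : ℤ) : ℝ)⌋)
      with hgdef
    have hbounds : ∀ x ∈ (hSfin.toFinset.filter fun x => f x = b0),
        g x ∈ Finset.Icc (-3 : ℤ) 3 ×ˢ Finset.Icc (-65 : ℤ) 65 := by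
      intro x hx
      have hx' := Finset.mem_filter.mp hx
      have hxS : x ∈ S := (Set.Finite.mem_toFinset _).mp hx'.1
      have hfx : f x = b0 := hx'.2
      obtain ⟨-, hd0, hd1, hfl⟩ := hkey x hxS
      obtain ⟨-, hd0', hd1', hfl'⟩ := hkey x0 hx0S
      set mx : ℤ := round (2 ^ n * x - y) with hmx
      set mx0 : ℤ := round (2 ^ n * x0 - y) with hmx0
      have hex : |2 ^ n * x - y - (mx:ℝ)| < σ := hxS.2
      have hex0 : |2 ^ n * x0 - y - (mx0:ℝ)| < σ := hx0S.2
      obtain ⟨he1, he2⟩ := abs_lt.mp hex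
      obtain ⟨he1', he2'⟩ := abs_lt.mp hex0
      have hff : f x = f x0 := by rw [hfx, hfx0]
      have hxx0 : x - x0 = (x - f x) - (x0 - f x0) := by rw [hff]; ring
      have hxx0a : x - x0 < ((3:ℝ)^M)⁻¹ := by rw [hxx0]; linarith
      have hxx0b : -(((3:ℝ)^M)⁻¹) < x - x0 := by rw [hxx0]; linarith
      have hb1 : 2^n*x - 2^n*x0 < 2^n*((3:ℝ)^M)⁻¹ := by
        nlinarith [mul_pos hp2 (sub_pos.mpr hxx0a)]
      have hb2 : -(2^n*((3:ℝ)^M)⁻¹) < 2^n*x - 2^n*x0 := by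
        nlinarith [mul_pos hp2 (show (0:ℝ) < x - x0 + ((3:ℝ)^M)⁻¹ by linarith)]
      -- first coordinate bound
      have hKr : |(mx:ℝ) - (mx0:ℝ)| < 3 := by
        rw [abs_lt]
        constructor <;> nlinarith [h2n3M]
      have hKint : mx - mx0 ∈ Finset.Icc (-3 : ℤ) 3 := by
        rw [Finset.mem_Icc]
        have hc : ((|mx - mx0| : ℤ) : ℝ) < 3 := by
          rw [Int.cast_abs]
          push_cast
          exact hKr
        have hc' : |mx - mx0| < 3 := by exact_mod_cast hc
        exact abs_le.mp hc'.le
      -- second coordinate bound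
      set w : ℝ := (3:ℝ) ^ N / 2 ^ n * ((mx - mx0 : ℤ) : ℝ) with hw
      have heq : 2^n * (((⌊(3:ℝ) ^ N * x⌋ : ℝ) - (⌊(3:ℝ) ^ N * x0⌋ : ℝ)) - w) =
          3^N * ((2^n*x - y - (mx:ℝ)) - (2^n*x0 - y - (mx0:ℝ))) := by
        rw [hfl, hfl', hw]
        push_cast
        field_simp
        ring
      have hediff : |(2^n*x - y - (mx:ℝ)) - (2^n*x0 - y - (mx0:ℝ))| < 2*σ := by
        rw [abs_lt]; constructor <;> linarith
      have hu : |((⌊(3:ℝ) ^ N * x⌋ : ℝ) - (⌊(3:ℝ) ^ N * x0⌋ : ℝ)) - w| < 64 := by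
        have hA1 : |2^n * (((⌊(3:ℝ) ^ N * x⌋ : ℝ) - (⌊(3:ℝ) ^ N * x0⌋ : ℝ)) - w)| < 2^n * 64 := by
          rw [heq, abs_mul, abs_of_pos hp3N]
          nlinarith [hp3N, hσ3N, abs_nonneg ((2^n*x - y - (mx:ℝ)) - (2^n*x0 - y - (mx0:ℝ))), hp2]
        rw [abs_mul, abs_of_pos hp2] at hA1
        exact (mul_lt_mul_iff_right₀ hp2).mp hA1
      have hw1 : (⌊w⌋ : ℝ) ≤ w := Int.floor_le w
      have hw2 : w < (⌊w⌋ : ℝ) + 1 := Int.lt_floor_add_one w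
      obtain ⟨hu1, hu2⟩ := abs_lt.mp hu
      have hqint : ⌊(3:ℝ) ^ N * x⌋ - ⌊(3:ℝ) ^ N * x0⌋ - ⌊w⌋ ∈ Finset.Icc (-65 : ℤ) 65 := by
        rw [Finset.mem_Icc]
        have hq1 : (-65 : ℝ) < ((⌊(3:ℝ) ^ N * x⌋ - ⌊(3:ℝ) ^ N * x0⌋ - ⌊w⌋ : ℤ) : ℝ) := by
          push_cast
          linarith
        have hq2 : ((⌊(3:ℝ) ^ N * x⌋ - ⌊(3:ℝ) ^ N * x0⌋ - ⌊w⌋ : ℤ) : ℝ) < 65 := by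
          push_cast
          linarith
        constructor
        · exact_mod_cast hq1.le
        · exact_mod_cast hq2.le
      rw [Finset.mem_product]
      exact ⟨hKint, hqint⟩
    have hinj : Set.InjOn g (hSfin.toFinset.filter fun x => f x = b0) := by
      intro x1 hx1 x2 hx2 hg
      simp only [Finset.coe_filter, Set.mem_setOf_eq] at hx1 hx2
      have hx1S : x1 ∈ S := (Set.Finite.mem_toFinset _).mp hx1.1
      have hx2S : x2 ∈ S := (Set.Finite.mem_toFinset _).mp hx2.1
      obtain ⟨-, -, -, hfl1⟩ := hkey x1 hx1S
      obtain ⟨-, -, -, hfl2⟩ := hkey x2 hx2S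
      have hg1 : (g x1).1 = (g x2).1 := by rw [hg]
      have hg2 : (g x1).2 = (g x2).2 := by rw [hg]
      simp only [hgdef] at hg1 hg2
      have hr : round (2 ^ n * x1 - y) = round (2 ^ n * x2 - y) := by omega
      rw [hr] at hg2
      have haa : ⌊(3:ℝ) ^ N * x1⌋ = ⌊(3:ℝ) ^ N * x2⌋ := by omega
      have haaR : ((⌊(3:ℝ) ^ N * x1⌋ : ℤ) : ℝ) = ((⌊(3:ℝ) ^ N * x2⌋ : ℤ) : ℝ) := by
        exact_mod_cast congrArg (fun z : ℤ => (z : ℝ)) haa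
      rw [hfl1, hfl2] at haaR
      exact mul_left_cancel₀ (ne_of_gt hp3N) haaR
    calc (hSfin.toFinset.filter fun x => f x = b0).card
        ≤ (Finset.Icc (-3 : ℤ) 3 ×ˢ Finset.Icc (-65 : ℤ) 65).card :=
          Finset.card_le_card_of_injOn g hbounds hinj
      _ = 917 := by rw [Finset.card_product, Int.card_Icc, Int.card_Icc]; rfl
  have hmain : hSfin.toFinset.card ≤ 917 * hTfin.toFinset.card :=
    Finset.card_le_mul_card_image_of_maps_to hmaps 917 hfiber
  rw [Set.ncard_eq_toFinset_card _ hSfin, Set.ncard_eq_toFinset_card _ hTfin]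
  exact_mod_cast hmain
end
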